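/- Let N ≥ 1 and let F_χ(z) = Σ_{d≥0} C(-χ + (N+1)d, d) z^d and G(z) = Σ_{d≥1} (N/d) C((N+1)(d-1), d-1) z^d as formal power series over ℚ, for each integer χ. Then G(z) · F_χ(z) = F_χ(z) - F_{χ+N}(z). -/

import Mathlib

/- STATEMENT 7: With `F_χ(z) = Σ_d C(-χ+(N+1)d, d) z^d` and
`G(z) = Σ_{d≥1} (N/d) C((N+1)(d-1), d-1) z^d` over `ℚ`, one has
`G ⬝ F_χ = F_χ - F_{χ+N}` for every integer `χ`. -/

/-- Generalized binomial coefficient `C(a,k) ∈ ℚ`. -/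
noncomputable def gchoose (a : ℤ) (k : ℕ) : ℚ :=
  (∏ i ∈ Finset.range k, ((a : ℚ) - (i : ℚ))) / (k.factorial : ℚ)

/-- `F_χ(z) = Σ_{d≥0} C(-χ+(N+1)d, d) z^d`. -/
noncomputable def Fs (N : ℕ) (χ : ℤ) : PowerSeries ℚ :=
  PowerSeries.mk fun d => gchoose (-χ + ((N : ℤ) + 1) * d) d

/-- `G(z) = Σ_{d≥1} (N/d) C((N+1)(d-1), d-1) z^d`. -/
noncomputable def Gs (N : ℕ) : PowerSeries ℚ :=
  PowerSeries.mk fun d =>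
    if d = 0 then 0 else (N : ℚ) / (d : ℚ) * (((N + 1) * (d - 1)).choose (d - 1) : ℚ)

lemma prod_shift (a : ℚ) (n : ℕ) :
    ∏ i ∈ Finset.range (n+1), (a - (i:ℚ)) = a * ∏ i ∈ Finset.range n, ((a-1) - (i:ℚ)) := by
  rw [Finset.prod_range_succ']
  rw [mul_comm]
  congr 1
  · simp
  · apply Finset.prod_congr rfl
    intro i _
    push_cast
    ring

lemma gchoose_zero (a : ℤ) : gchoose a 0 = 1 := by simp [gchoose]

lemma gchoose_pascal (a : ℤ) (n : ℕ) :
    gchoose a (n+1) = gchoose (a-1) (n+1) + gchoose (a-1) n := by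
  unfold gchoose
  rw [prod_shift ((a:ℚ)) n, Finset.prod_range_succ]
  have h1 : ((a - 1 : ℤ) : ℚ) = (a:ℚ) - 1 := by push_cast; ring
  rw [h1, Nat.factorial_succ]
  have h2 : ((n:ℚ) + 1) ≠ 0 := by positivity
  have h3 : ((n.factorial : ℚ)) ≠ 0 := by
    exact_mod_cast Nat.factorial_ne_zero n
  push_cast
  field_simp
  ring

lemma gchoose_absorb (a : ℤ) (n : ℕ) :
    ((n:ℚ)+1) * gchoose a (n+1) = (a:ℚ) * gchoose (a-1) n := by
  unfold gchoose
  rw [prod_shift ((a:ℚ)) n, Nat.factorial_succ]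
  have h1 : ((a - 1 : ℤ) : ℚ) = (a:ℚ) - 1 := by push_cast; ring
  rw [h1]
  have h2 : ((n:ℚ) + 1) ≠ 0 := by positivity
  have h3 : ((n.factorial : ℚ)) ≠ 0 := by exact_mod_cast Nat.factorial_ne_zero n
  push_cast
  field_simp

lemma gchoose_natCast (n k : ℕ) : gchoose (n:ℤ) k = (n.choose k : ℚ) := by
  have key : ∀ k : ℕ, ∏ i ∈ Finset.range k, ((n:ℚ) - (i:ℚ)) = (n.descFactorial k : ℚ) := by
    intro k
    induction k with
    | zero => simp
    | succ m ih =>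
      rw [Finset.prod_range_succ, ih, Nat.descFactorial_succ]
      rcases le_or_gt m n with h | h
      · push_cast [h]; ring
      · have h0 : n.descFactorial m = 0 := Nat.descFactorial_of_lt h
        have h0' : n - m = 0 := Nat.sub_eq_zero_of_le h.le
        rw [h0, h0']
        push_cast
        ring
  unfold gchoose
  have hc : ((n:ℤ) : ℚ) = (n:ℚ) := by push_cast; ring
  rw [show (∏ i ∈ Finset.range k, (((n:ℤ):ℚ) - (i:ℚ))) = ∏ i ∈ Finset.range k, ((n:ℚ) - (i:ℚ)) by
    congr 1,
    key, Nat.descFactorial_eq_factorial_mul_choose]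
  have h3 : ((k.factorial : ℚ)) ≠ 0 := by exact_mod_cast Nat.factorial_ne_zero k
  push_cast
  field_simp

lemma coeff_Fs (N : ℕ) (χ : ℤ) (d : ℕ) :
    PowerSeries.coeff d (Fs N χ) = gchoose (-χ + ((N : ℤ) + 1) * d) d :=
  PowerSeries.coeff_mk _ _

lemma Fs_pascal (N : ℕ) (χ : ℤ) :
    Fs N χ = Fs N (χ + 1) + PowerSeries.X * Fs N (χ - N) := by
  ext d
  rw [map_add]
  cases d with
  | zero =>
    rw [PowerSeries.coeff_zero_X_mul, coeff_Fs, coeff_Fs]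
    simp [gchoose_zero]
  | succ n =>
    rw [PowerSeries.coeff_succ_X_mul, coeff_Fs, coeff_Fs, coeff_Fs]
    have h1 : -(χ + 1) + ((N : ℤ) + 1) * ((n + 1 : ℕ) : ℤ)
        = (-χ + ((N : ℤ) + 1) * ((n + 1 : ℕ) : ℤ)) - 1 := by push_cast; ring
    have h2 : -(χ - N) + ((N : ℤ) + 1) * ((n : ℕ) : ℤ)
        = (-χ + ((N : ℤ) + 1) * ((n + 1 : ℕ) : ℤ)) - 1 := by push_cast; ring
    rw [h1, h2]
    exact gchoose_pascal _ n

noncomputable def Bser (N : ℕ) (χ : ℤ) : PowerSeries ℚ :=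
  Fs N χ - PowerSeries.C ((N : ℚ) + 1) * (PowerSeries.X * Fs N (χ - N))

lemma gchoose_mul_succ (N n : ℕ) :
    gchoose (((N : ℤ) + 1) * ((n : ℤ) + 1)) (n + 1)
      = ((N : ℚ) + 1) * gchoose (((N : ℤ) + 1) * ((n : ℤ) + 1) - 1) n := by
  have h := gchoose_absorb (((N : ℤ) + 1) * ((n : ℤ) + 1)) n
  have hn : ((n : ℚ) + 1) ≠ 0 := by positivity
  have hc : (((((N : ℤ) + 1) * ((n : ℤ) + 1)) : ℤ) : ℚ) = ((N : ℚ) + 1) * ((n : ℚ) + 1) := by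
    push_cast; ring
  rw [hc] at h
  apply mul_left_cancel₀ hn
  linear_combination h

lemma Bser_zero (N : ℕ) : Bser N 0 = 1 := by
  ext d
  unfold Bser
  rw [map_sub]
  cases d with
  | zero =>
    rw [coeff_Fs]
    simp [gchoose_zero, PowerSeries.coeff_zero_X_mul]
  | succ n =>
    rw [PowerSeries.coeff_C_mul, PowerSeries.coeff_succ_X_mul, coeff_Fs, coeff_Fs]
    have h1 : -(0 : ℤ) + ((N : ℤ) + 1) * ((n + 1 : ℕ) : ℤ)
        = ((N : ℤ) + 1) * ((n : ℤ) + 1) := by push_cast; ring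
    have h2 : -((0 : ℤ) - N) + ((N : ℤ) + 1) * ((n : ℕ) : ℤ)
        = ((N : ℤ) + 1) * ((n : ℤ) + 1) - 1 := by push_cast; ring
    rw [h1, h2, gchoose_mul_succ]
    simp

lemma Bser_pascal (N : ℕ) (χ : ℤ) :
    Bser N χ - Bser N (χ + 1) = PowerSeries.X * Bser N (χ - N) := by
  have h1 := Fs_pascal N χ
  have h2 := Fs_pascal N (χ - N)
  unfold Bser
  have e1 : χ + 1 - N = χ - N + 1 := by ring
  rw [e1]
  linear_combination h1 - PowerSeries.C ((N : ℚ) + 1) * PowerSeries.X * h2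

lemma int_const {g : ℤ → ℚ} (h : ∀ ψ : ℤ, g ψ = g (ψ + 1)) : ∀ ψ : ℤ, g ψ = g 0 := by
  intro ψ
  induction ψ using Int.induction_on with
  | zero => rfl
  | succ n ihn => exact (h n).symm.trans ihn
  | pred n ihn =>
    have hh := h (-(n : ℤ) - 1)
    rw [show (-(n : ℤ) - 1 + 1) = -(n : ℤ) by ring] at hh
    exact hh.trans ihn

lemma FB (N : ℕ) : ∀ d : ℕ, ∀ χ χ' : ℤ,
    PowerSeries.coeff d (Fs N χ' * Bser N χ) = PowerSeries.coeff d (Fs N (χ + χ')) := by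
  intro d
  induction d using Nat.strong_induction_on with
  | _ d ih =>
  intro χ χ'
  have rel : ∀ ψ : ℤ,
      (Fs N χ' * Bser N ψ - Fs N (ψ + χ')) - (Fs N χ' * Bser N (ψ + 1) - Fs N ((ψ + 1) + χ'))
        = PowerSeries.X * (Fs N χ' * Bser N (ψ - N) - Fs N ((ψ - N) + χ')) := by
    intro ψ
    have hb := Bser_pascal N ψ
    have hf := Fs_pascal N (ψ + χ')
    have e1 : ψ + χ' + 1 = ψ + 1 + χ' := by ring
    have e2 : ψ + χ' - N = ψ - N + χ' := by ring
    rw [e1, e2] at hf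
    linear_combination Fs N χ' * hb - hf
  have hconst : ∀ ψ : ℤ,
      (fun ψ : ℤ => PowerSeries.coeff d (Fs N χ' * Bser N ψ - Fs N (ψ + χ'))) ψ
        = (fun ψ : ℤ => PowerSeries.coeff d (Fs N χ' * Bser N ψ - Fs N (ψ + χ'))) (ψ + 1) := by
    intro ψ
    have h := congrArg (PowerSeries.coeff d) (rel ψ)
    rw [map_sub] at h
    have hX : PowerSeries.coeff d
        (PowerSeries.X * (Fs N χ' * Bser N (ψ - N) - Fs N ((ψ - N) + χ'))) = 0 := by
      cases d with
      | zero => exact PowerSeries.coeff_zero_X_mul _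
      | succ m =>
        rw [PowerSeries.coeff_succ_X_mul, map_sub, ih m (Nat.lt_succ_self m), sub_self]
    rw [hX] at h
    simpa using sub_eq_zero.mp h
  have hc := int_const hconst χ
  have h0 : Fs N χ' * Bser N 0 - Fs N (0 + χ') = 0 := by
    rw [Bser_zero, mul_one, zero_add, sub_self]
  rw [h0] at hc
  rw [map_sub, map_zero] at hc
  linarith [hc]

lemma G_eq (N : ℕ) : Gs N = 1 - Bser N N := by
  ext d
  cases d with
  | zero =>
    rw [map_sub]
    unfold Bser Gs
    rw [map_sub, PowerSeries.coeff_mk, coeff_Fs]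
    simp [gchoose_zero, PowerSeries.coeff_zero_X_mul]
  | succ n =>
    rw [map_sub]
    unfold Bser Gs
    rw [map_sub, PowerSeries.coeff_mk, PowerSeries.coeff_C_mul,
      PowerSeries.coeff_succ_X_mul, coeff_Fs, coeff_Fs]
    have h1 : -(N : ℤ) + ((N : ℤ) + 1) * ((n + 1 : ℕ) : ℤ)
        = ((N : ℤ) + 1) * (n : ℤ) + 1 := by push_cast; ring
    have h2 : -((N : ℤ) - N) + ((N : ℤ) + 1) * ((n : ℕ) : ℤ)
        = (((N + 1) * n : ℕ) : ℤ) := by push_cast; ring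
    have habs := gchoose_absorb (((N : ℤ) + 1) * (n : ℤ) + 1) n
    have hA : (((((N : ℤ) + 1) * (n : ℤ) + 1) : ℤ) : ℚ) = ((N : ℚ) + 1) * (n : ℚ) + 1 := by
      push_cast; ring
    rw [hA] at habs
    have h3 : (((N : ℤ) + 1) * (n : ℤ) + 1) - 1 = (((N + 1) * n : ℕ) : ℤ) := by push_cast; ring
    rw [h3, gchoose_natCast] at habs
    rw [h1, h2, gchoose_natCast]
    have hn : ((n : ℚ) + 1) ≠ 0 := by positivity
    simp only [Nat.succ_ne_zero, if_false, PowerSeries.coeff_one, Nat.succ_sub_one]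
    push_cast
    rw [div_mul_eq_mul_div, div_eq_iff hn]
    linear_combination habs

theorem G_mul_F (N : ℕ) (hN : 1 ≤ N) (χ : ℤ) :
    Gs N * Fs N χ = Fs N χ - Fs N (χ + N) := by
  have hM : Fs N χ * Bser N (N : ℤ) = Fs N ((N : ℤ) + χ) :=
    PowerSeries.ext fun d => FB N d (N : ℤ) χ
  rw [G_eq, show (χ + (N : ℤ)) = (N : ℤ) + χ from add_comm χ N]
  linear_combination -hM
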